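/- (Pairwise flipping.) Let π : Y → Y be a fixed-point-free involution pairing each class with a distinct partner class, and let 0 ≤ ρ ≤ 1/2. Suppose the class-dependent transition matrix is given by t_{y,y} = 1 − ρ, t_{π(y),y} = ρ, and t_{ỹ,y} = 0 for ỹ ∉ {y, π(y)}. Assume there is a measurable map x ↦ y_x such that for μ-almost every x, y_x maximizes y ↦ η_y(x) and the clean conditional distribution at x is supported on the pair {y_x, π(y_x)}, i.e., η_{π(y_x)}(x) = 1 − η_{y_x}(x). Then the Bayes error rate of the noisy distribution satisfies R*_ρ = R* + ρ (1 − 2 R*). -/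

import Mathlib

open MeasureTheory

/-- Pairwise label flipping: if each class is flipped to its partner class
`π y` with probability `ρ ≤ 1/2`, and the clean conditional distribution is
a.e. supported on the pair `{y_x, π y_x}` with `y_x` a Bayes label, then
`R*_ρ = R* + ρ (1 − 2 R*)`. -/
theorem ber_pairwise_flipping
    {X : Type*} [MeasurableSpace X] (μ : Measure X) [IsProbabilityMeasure μ]
    {Y : Type*} [Fintype Y] [Nonempty Y] [MeasurableSpace Y] [MeasurableSingletonClass Y]
    (hC : 2 ≤ Fintype.card Y)
    (η : X → Y → ℝ)
    (hmeas : ∀ y, Measurable fun x => η x y)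
    (hnn : ∀ x y, 0 ≤ η x y)
    (hsum : ∀ x, ∑ y, η x y = 1)
    (π : Y → Y) (hinv : ∀ y, π (π y) = y) (hfpf : ∀ y, π y ≠ y)
    (ρ : ℝ) (hρ0 : 0 ≤ ρ) (hρh : ρ ≤ 1 / 2)
    (t : Y → Y → ℝ)
    (htd : ∀ y, t y y = 1 - ρ)
    (htp : ∀ y, t (π y) y = ρ)
    (hto : ∀ y' y, y' ≠ y → y' ≠ π y → t y' y = 0)
    (ηρ : X → Y → ℝ)
    (hηρ : ∀ x y', ηρ x y' = ∑ y, t y' y * η x y)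
    (yx : X → Y) (hyx : Measurable yx)
    (hmax : ∀ᵐ x ∂μ, (∀ y, η x y ≤ η x (yx x)) ∧ η x (π (yx x)) = 1 - η x (yx x))
    (Rstar Rρ : ℝ)
    (hR : Rstar = ∫ x, (1 - ⨆ y, η x y) ∂μ)
    (hRρ : Rρ = ∫ x, (1 - ⨆ y', ηρ x y') ∂μ) :
    Rρ = Rstar + ρ * (1 - 2 * Rstar) := by
  classical
  have hbdd : ∀ x, BddAbove (Set.range (η x)) := fun x => (Set.finite_range _).bddAbove
  have hbddρ : ∀ x, BddAbove (Set.range (ηρ x)) := fun x => (Set.finite_range _).bddAbove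
  -- pointwise a.e. identity
  have key : ∀ᵐ x ∂μ,
      (1 - ⨆ y', ηρ x y') = (1 - 2 * ρ) * (1 - ⨆ y, η x y) + ρ := by
    filter_upwards [hmax] with x hx
    obtain ⟨h1, h2⟩ := hx
    set a := yx x with ha
    set m := η x a with hm
    have hba : π a ≠ a := hfpf a
    have hm0 : 0 ≤ m := hnn x a
    have hmb : η x (π a) = 1 - m := h2
    have hm1 : m ≤ 1 := by have := hnn x (π a); linarith [hmb ▸ this]
    have hmhalf : 1 - m ≤ m := by have := h1 (π a); rwa [hmb] at this
    -- other classes have zero probability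
    have hzero : ∀ y, y ≠ a → y ≠ π a → η x y = 0 := by
      intro y hya hyb
      have hpair : ∑ z ∈ ({a, π a} : Finset Y), η x z = 1 := by
        rw [Finset.sum_pair (Ne.symm hba)]
        rw [← hm, hmb]; ring
      have hrest : ∑ z ∈ (Finset.univ \ ({a, π a} : Finset Y)), η x z = 0 := by
        rw [Finset.sum_sdiff_eq_sub (Finset.subset_univ _), hsum, hpair]; ring
      have := (Finset.sum_eq_zero_iff_of_nonneg (fun z _ => hnn x z)).mp hrest
      exact this y (by simp [hya, hyb])
    -- formula for noisy posterior
    have hform : ∀ y', ηρ x y' = (1 - ρ) * η x y' + ρ * η x (π y') := by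
      intro y'
      rw [hηρ]
      have hne : y' ≠ π y' := Ne.symm (hfpf y')
      rw [← Finset.sum_subset (Finset.subset_univ ({y', π y'} : Finset Y))]
      · rw [Finset.sum_pair hne, htd]
        have htpy : t y' (π y') = ρ := by have := htp (π y'); rwa [hinv] at this
        rw [htpy]
      · intro y _ hy
        simp only [Finset.mem_insert, Finset.mem_singleton, not_or] at hy
        have ht0 : t y' y = 0 := by
          refine hto y' y (fun h => hy.1 h.symm) (fun h => hy.2 ?_)
          rw [h, hinv]
        rw [ht0, zero_mul]
    have va : ηρ x a = (1 - ρ) * m + ρ * (1 - m) := by rw [hform, ← hm, hmb]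
    have vb : ηρ x (π a) = (1 - ρ) * (1 - m) + ρ * m := by
      rw [hform, hmb, hinv, ← hm]
    have hsupη : (⨆ y, η x y) = m :=
      le_antisymm (ciSup_le h1) (le_ciSup (hbdd x) a)
    have hsupηρ : (⨆ y', ηρ x y') = (1 - ρ) * m + ρ * (1 - m) := by
      refine le_antisymm (ciSup_le fun y' => ?_) (va ▸ le_ciSup (hbddρ x) a)
      by_cases hya : y' = a
      · rw [hya, va]
      by_cases hyb : y' = π a
      · rw [hyb, vb]; nlinarith
      · have h0 : η x y' = 0 := hzero y' hya hyb
        have h0' : η x (π y') = 0 := by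
          refine hzero (π y') (fun h => hyb ?_) (fun h => hya ?_)
          · rw [← hinv y', h]
          · rw [← hinv y', h, hinv]
        rw [hform, h0, h0']; nlinarith
    rw [hsupη, hsupηρ]; ring
  -- measurability and integrability of the clean excess risk
  have hfmeas : Measurable fun x => ⨆ y, η x y := by
    have := Finset.measurable_sup' (Finset.univ_nonempty (α := Y))
      (f := fun y x => η x y) (fun y _ => hmeas y)
    convert this using 1
    ext x
    rw [Finset.sup'_apply, Finset.sup'_univ_eq_ciSup]
  have hsup01 : ∀ x, 0 ≤ (⨆ y, η x y) ∧ (⨆ y, η x y) ≤ 1 := by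
    intro x
    constructor
    · obtain ⟨y0⟩ := (inferInstance : Nonempty Y)
      exact le_trans (hnn x y0) (le_ciSup (hbdd x) y0)
    · refine ciSup_le fun y => ?_
      calc η x y ≤ ∑ z, η x z :=
            Finset.single_le_sum (fun z _ => hnn x z) (Finset.mem_univ y)
        _ = 1 := hsum x
  have hint : Integrable (fun x => 1 - ⨆ y, η x y) μ := by
    refine Integrable.mono' (integrable_const (1 : ℝ))
      ((measurable_const.sub hfmeas).aestronglyMeasurable) ?_
    refine Filter.Eventually.of_forall fun x => ?_
    have := hsup01 x
    rw [Real.norm_eq_abs, abs_le]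
    constructor <;> linarith [this.1, this.2]
  -- put it together
  rw [hRρ, integral_congr_ae key]
  rw [integral_add (hint.const_mul _) (integrable_const ρ)]
  rw [MeasureTheory.integral_const_mul, integral_const, probReal_univ, smul_eq_mul,
    one_mul, ← hR]
  ring
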